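/- Let A be a finite alphabet, let w₁, w₂ ∈ A* with |w₁| = |w₂|, let k ∈ ℕ with k > h(w₁, w₂), let a, b ∈ A with a ≠ b, and let θ ∈ (0, 2]. Then lev_θ(st(w₁, aᵏbaᵏ), st(w₂, aᵏbaᵏ)) = θ · h(w₁, w₂); that is, the cheapest edit sequence between the two stretched words uses only substitutions, one for each position where w₁ and w₂ differ. -/

import Mathlib

/-- A cost structure for edit distance (ported verbatim from the Mathlib of December 2024,
`Mathlib/Data/List/EditDistance/Defs.lean`, since removed from Mathlib). -/
structure Levenshtein.Cost (α β δ : Type*) where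
  /-- Cost to delete an element from a list. -/
  delete : α → δ
  /-- Cost in insert an element into a list. -/
  insert : β → δ
  /-- Cost to substitute one element for another in a list. -/
  substitute : α → β → δ

/-- (Internal implementation detail of `suffixLevenshtein`, ported from older Mathlib.) -/
def Levenshtein.impl {α β δ : Type*} [AddZeroClass δ] [Min δ]
    (C : Levenshtein.Cost α β δ) (xs : List α) (y : β) (d : {r : List δ // 0 < r.length}) :
    {r : List δ // 0 < r.length} :=
  let ⟨ds, w⟩ := d
  xs.zip (ds.zip ds.tail) |>.foldr
    (init := ⟨[C.insert y + ds.getLast (List.length_pos_iff.mp w)], by simp⟩)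
    (fun ⟨x, d₀, d₁⟩ ⟨r, w⟩ =>
      ⟨min (C.delete x + r[0]) (min (C.insert y + d₀) (C.substitute x y + d₁)) :: r, by simp⟩)

/-- `suffixLevenshtein C xs ys` computes the Levenshtein distance
(using the cost functions provided by a `C : Cost α β δ`)
from each suffix of the list `xs` to the list `ys` (ported from older Mathlib). -/
def suffixLevenshtein {α β δ : Type*} [AddZeroClass δ] [Min δ]
    (C : Levenshtein.Cost α β δ) (xs : List α) (ys : List β) :
    {r : List δ // 0 < r.length} :=
  ys.foldr
    (Levenshtein.impl C xs)
    (xs.foldr (init := ⟨[0], by simp⟩) (fun a ⟨r, w⟩ => ⟨(C.delete a + r[0]) :: r, by simp⟩))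

/-- `levenshtein C xs ys` computes the Levenshtein distance
(using the cost functions provided by a `C : Cost α β δ`)
from the list `xs` to the list `ys` (ported from older Mathlib). -/
def levenshtein {α β δ : Type*} [AddZeroClass δ] [Min δ]
    (C : Levenshtein.Cost α β δ) (xs : List α) (ys : List β) : δ :=
  let ⟨r, w⟩ := suffixLevenshtein C xs ys
  r[0]

/-- Cost structure for the generalized Levenshtein distance:
insertions and deletions cost `γ`, substitutions cost `θ`. -/
def levCost (A : Type*) [DecidableEq A] (γ θ : ℝ) : Levenshtein.Cost A A ℝ where
  delete _ := γ
  insert _ := γ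
  substitute a b := if a = b then 0 else θ

/-- The generalized Levenshtein distance `lev_{γ,θ}` between two words over `A`:
the minimal total cost of transforming one word into the other by insertions and
deletions (of cost `γ`) and substitutions (of cost `θ`). -/
def lev {A : Type*} [DecidableEq A] (γ θ : ℝ) (u v : List A) : ℝ :=
  levenshtein (levCost A γ θ) u v

/-- The isometry group of a language `L ⊆ A*` with respect to a distance `d` on `A*`:
the group (under composition) of bijections of `L` preserving `d`. -/
def IsomGroup {A : Type*} (d : List A → List A → ℝ) (L : Set (List A)) :
    Subgroup (Equiv.Perm L) where
  carrier := {φ : Equiv.Perm L | ∀ u v : L, d (φ u) (φ v) = d u v}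
  one_mem' := by intro u v; rfl
  mul_mem' := by intro φ ψ hφ hψ u v; simp only [Equiv.Perm.mul_apply]; rw [hφ, hψ]
  inv_mem' := by
    intro φ hφ u v
    have h := hφ (φ⁻¹ u) (φ⁻¹ v)
    simpa using h.symm

/-- The Hamming distance between two words (of equal length): the number of positions at
which they differ. -/
def hammingDistL {A : Type*} [DecidableEq A] (u v : List A) : ℕ :=
  (u.zip v).countP fun p => decide (p.1 ≠ p.2)


/-- Word stretching: `st(Λ, w₂) = Λ` and `st(w₁·a, w₂) = st(w₁, w₂)·w₂·a`. -/
def st {A : Type*} (w₁ w₂ : List A) : List A :=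
  w₁.foldl (fun acc a => acc ++ w₂ ++ [a]) []



section LevPort

variable {α β δ : Type*} [AddZeroClass δ] [Min δ] (C : Levenshtein.Cost α β δ)

theorem Levenshtein.impl_cons_port {x : α} {xs : List α} {y : β} {d : δ} {ds : List δ}
    {w : 0 < (d :: ds).length} (w' : 0 < List.length ds) :
    Levenshtein.impl C (x :: xs) y ⟨d :: ds, w⟩ =
      let ⟨r, w⟩ := Levenshtein.impl C xs y ⟨ds, w'⟩
      ⟨min (C.delete x + r[0]) (min (C.insert y + d) (C.substitute x y + ds[0])) :: r, by simp⟩ :=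
  match ds, w' with | _ :: _, _ => rfl

theorem Levenshtein.impl_length_port (xs : List α) (y : β) (d : {r : List δ // 0 < r.length})
    (w : d.1.length = xs.length + 1) :
    (Levenshtein.impl C xs y d).1.length = xs.length + 1 := by
  induction xs generalizing d with
  | nil => rfl
  | cons x xs ih =>
    dsimp [Levenshtein.impl]
    match d, w with
    | ⟨d₁ :: d₂ :: ds, _⟩, w =>
      dsimp
      congr 1
      exact ih ⟨d₂ :: ds, (by simp)⟩ (by simpa using w)

theorem suffixLevenshtein_length_port (xs : List α) (ys : List β) :
    (suffixLevenshtein C xs ys).1.length = xs.length + 1 := by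
  induction ys with
  | nil =>
    dsimp [suffixLevenshtein]
    induction xs with
    | nil => rfl
    | cons _ xs ih =>
      simp_all
  | cons y ys ih =>
    dsimp [suffixLevenshtein]
    rw [Levenshtein.impl_length_port]
    exact ih

theorem suffixLevenshtein_cons₂_port (xs : List α) (y : β) (ys : List β) :
    suffixLevenshtein C xs (y :: ys) = (Levenshtein.impl C xs) y (suffixLevenshtein C xs ys) :=
  rfl

theorem suffixLevenshtein_cons₁_aux_port {α : Type*} {x y : {r : List α // 0 < r.length}}
    (w₀ : x.1[0]'x.2 = y.1[0]'y.2) (w : x.1.tail = y.1.tail) : x = y := by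
  match x, y with
  | ⟨hx :: tx, _⟩, ⟨hy :: ty, _⟩ => simp_all

theorem suffixLevenshtein_cons₁_port (x : α) (xs : List α) (ys : List β) :
    suffixLevenshtein C (x :: xs) ys =
      ⟨levenshtein C (x :: xs) ys :: (suffixLevenshtein C xs ys).1, by simp⟩ := by
  induction ys with
  | nil =>
    rfl
  | cons y ys ih =>
    apply suffixLevenshtein_cons₁_aux_port
    · rfl
    · rw [suffixLevenshtein_cons₂_port C (x :: xs), ih, Levenshtein.impl_cons_port]
      · rfl
      · simp [suffixLevenshtein_length_port]

@[simp]
theorem levenshtein_nil_nil : levenshtein C [] [] = 0 := by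
  simp [levenshtein, suffixLevenshtein]

@[simp]
theorem levenshtein_nil_cons (y : β) (ys : List β) :
    levenshtein C [] (y :: ys) = C.insert y + levenshtein C [] ys := by
  have key : ∀ l : List δ, l.length = 1 → ∀ h hh, l.getLast h = l[0]'hh := by
    intro l hl
    match l, hl with
    | [z], _ => intro _ _; rfl
  show C.insert y + (suffixLevenshtein C [] ys).1.getLast
      (List.length_pos_iff.mp (suffixLevenshtein C [] ys).2)
    = C.insert y + (suffixLevenshtein C [] ys).1[0]'(suffixLevenshtein C [] ys).2
  congr 1
  exact key _ (suffixLevenshtein_length_port C [] ys) _ _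

@[simp]
theorem levenshtein_cons_nil (x : α) (xs : List α) :
    levenshtein C (x :: xs) [] = C.delete x + levenshtein C xs [] :=
  rfl

theorem levenshtein_cons_cons (x : α) (xs : List α) (y : β) (ys : List β) :
    levenshtein C (x :: xs) (y :: ys) =
      min (C.delete x + levenshtein C xs (y :: ys))
        (min (C.insert y + levenshtein C (x :: xs) ys)
          (C.substitute x y + levenshtein C xs ys)) := by
  have h1 := suffixLevenshtein_cons₁_port C x xs (y :: ys)
  have h2 : suffixLevenshtein C (x :: xs) (y :: ys)
      = Levenshtein.impl C (x :: xs) y (suffixLevenshtein C (x :: xs) ys) := rfl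
  rw [suffixLevenshtein_cons₁_port C x xs ys] at h2
  rw [Levenshtein.impl_cons_port C (by simp [suffixLevenshtein_length_port])] at h2
  have h3 := congrArg (fun r : {r : List δ // 0 < r.length} => r.1[0]'r.2) (h1.symm.trans h2)
  simp only [List.getElem_cons_zero] at h3
  rw [h3]
  rfl

end LevPort

set_option linter.unusedSectionVars false
set_option linter.unusedVariables false
set_option maxHeartbeats 1000000

namespace St7

variable {A : Type*} [DecidableEq A] (k : ℕ) (a b : A)

/-- half block: `a^k c a^k` -/
def blk (c : A) : List A := List.replicate k a ++ c :: List.replicate k a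

def Yw : List A → List A := fun cs => (cs.map (fun c => b :: blk k a c)).flatten

def Xw : List A → List A
  | [] => []
  | c :: cs => blk k a c ++ Yw k a b cs

@[simp] lemma length_blk (c : A) : (blk k a c).length = 2*k+1 := by
  simp [blk]; omega

@[simp] lemma Yw_nil : Yw k a b [] = [] := rfl

@[simp] lemma Yw_cons (c : A) (cs : List A) :
    Yw k a b (c :: cs) = b :: (blk k a c ++ Yw k a b cs) := by
  simp [Yw]

@[simp] lemma length_Yw (cs : List A) : (Yw k a b cs).length = cs.length * (2*k+2) := by
  induction cs with
  | nil => simp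
  | cons c cs ih => simp [ih]; ring

lemma Xw_cons (c : A) (cs : List A) : Xw k a b (c :: cs) = blk k a c ++ Yw k a b cs := rfl

lemma length_Xw (cs : List A) (h : cs ≠ []) : (Xw k a b cs).length + 1 = cs.length * (2*k+2) := by
  match cs with
  | c :: cs => simp [Xw_cons]; ring

lemma Yw_append (cs₁ cs₂ : List A) : Yw k a b (cs₁ ++ cs₂) = Yw k a b cs₁ ++ Yw k a b cs₂ := by
  simp [Yw]

lemma Yw_eq_cons_Xw (cs : List A) (h : cs ≠ []) :
    Yw k a b cs = b :: Xw k a b cs := by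
  match cs with
  | c :: cs => simp [Xw_cons]

lemma Xw_append (cs₁ cs₂ : List A) (h₁ : cs₁ ≠ []) (h₂ : cs₂ ≠ []) :
    Xw k a b (cs₁ ++ cs₂) = Xw k a b cs₁ ++ b :: Xw k a b cs₂ := by
  match cs₁ with
  | c :: cs₁ =>
    simp only [List.cons_append, Xw_cons, Yw_append, Yw_eq_cons_Xw k a b cs₂ h₂]
    simp

lemma count_blk (c : A) : (blk k a c).count a = 2*k + if c = a then 1 else 0 := by
  simp [blk, List.count_cons, List.count_replicate]
  split <;> omega

lemma count_Yw (cs : List A) (hab : a ≠ b) :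
    (Yw k a b cs).count a = cs.length * (2*k) + cs.count a := by
  induction cs with
  | nil => simp
  | cons c cs ih =>
    simp [List.count_cons, List.count_append, ih, count_blk, Ne.symm hab]
    split <;> ring

lemma count_Xw (cs : List A) (hab : a ≠ b) :
    (Xw k a b cs).count a = cs.length * (2*k) + cs.count a := by
  match cs with
  | [] => simp [Xw]
  | c :: cs =>
    simp [Xw_cons, List.count_append, count_Yw k a b cs hab, count_blk,
      List.count_cons]
    split <;> ring

lemma blk_get (c : A) (i : ℕ) :
    (blk k a c)[i]? = if i < k then some a else if i = k then some c
      else if i < 2*k+1 then some a else none := by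
  simp only [blk]
  split_ifs with h1 h2 h3
  · rw [List.getElem?_append_left (by simpa using h1)]; simp [h1]
  · subst h2; rw [List.getElem?_append_right (by simp)]; simp
  · rw [List.getElem?_append_right (by simp; omega)]
    simp only [List.length_replicate]
    have he : i - k = (i - k - 1) + 1 := by omega
    rw [he, List.getElem?_cons_succ, List.getElem?_replicate]
    have h4 : i - k - 1 < k := by omega
    simp [h4]
  · rw [List.getElem?_append_right (by simp; omega)]
    simp only [List.length_replicate]
    have he : i - k = (i - k - 1) + 1 := by omega
    rw [he, List.getElem?_cons_succ, List.getElem?_replicate]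
    have h4 : ¬ (i - k - 1 < k) := by omega
    simp [h4]

lemma Yw_get (cs : List A) (i : ℕ) (hi : i < (Yw k a b cs).length) :
    ∃ t, ∃ ht : t < cs.length, ∃ r, r < 2*k+2 ∧ i = t*(2*k+2) + r ∧
      ((r = 0 ∧ (Yw k a b cs)[i]? = some b) ∨
       (1 ≤ r ∧ r ≠ k+1 ∧ (Yw k a b cs)[i]? = some a) ∨
       (r = k+1 ∧ (Yw k a b cs)[i]? = some (cs[t]'ht))) := by
  induction cs generalizing i with
  | nil => simp at hi
  | cons c cs ih =>
    have hY : Yw k a b (c :: cs) = ([b] ++ blk k a c) ++ Yw k a b cs := by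
      simp [Yw_cons]
    by_cases hcase : i < 2*k+2
    · have hget : (Yw k a b (c::cs))[i]? = ([b] ++ blk k a c)[i]? := by
        rw [hY, List.getElem?_append_left (by simp; omega)]
      refine ⟨0, by simp, i, hcase, by omega, ?_⟩
      rcases Nat.eq_zero_or_pos i with rfl | hip
      · left; refine ⟨rfl, ?_⟩; rw [hget]; simp
      · have hget2 : (Yw k a b (c::cs))[i]? = (blk k a c)[i-1]? := by
          rw [hget, List.getElem?_append_right (by simp; omega)]; simp
        rw [hget2, blk_get]
        by_cases h1 : i - 1 < k
        · right; left; refine ⟨hip, by omega, ?_⟩; simp [h1]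
        · by_cases h2 : i - 1 = k
          · right; right; refine ⟨by omega, ?_⟩; simp [h1, h2]
          · right; left; refine ⟨hip, by omega, ?_⟩
            have h3 : i - 1 < 2*k+1 := by omega
            simp [h1, h2, h3]
    · have hlY : (Yw k a b (c::cs)).length = (cs.length + 1) * (2*k+2) := by
        simp only [length_Yw, List.length_cons]
      have hring0 : (cs.length + 1) * (2*k+2) = cs.length * (2*k+2) + (2*k+2) := by ring
      have hilen : i - (2*k+2) < (Yw k a b cs).length := by
        rw [hlY] at hi; rw [length_Yw]; omega
      obtain ⟨t, ht, r, hr, hir, hsym⟩ := ih (i - (2*k+2)) hilen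
      have hget : (Yw k a b (c::cs))[i]? = (Yw k a b cs)[i - (2*k+2)]? := by
        rw [hY, List.getElem?_append_right (by simp; omega)]
        congr 1
        simp only [List.length_append, List.length_singleton, length_blk]
        omega
      have hring : (t+1)*(2*k+2) = t*(2*k+2) + (2*k+2) := by ring
      refine ⟨t+1, by simp; omega, r, hr, by omega, ?_⟩
      rcases hsym with ⟨h0, hs⟩ | ⟨h1, h2, hs⟩ | ⟨h1, hs⟩
      · left; exact ⟨h0, by rw [hget]; exact hs⟩
      · right; left; exact ⟨h1, h2, by rw [hget]; exact hs⟩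
      · right; right; refine ⟨h1, ?_⟩; rw [hget, hs]; simp

lemma Xw_get (cs : List A) (i : ℕ) (hi : i < (Xw k a b cs).length) :
    ∃ t, ∃ ht : t < cs.length, ∃ r, r < 2*k+2 ∧ i = t*(2*k+2) + r ∧
      ((r ≠ k ∧ r ≠ 2*k+1 ∧ (Xw k a b cs)[i]? = some a) ∨
       (r = k ∧ (Xw k a b cs)[i]? = some (cs[t]'ht)) ∨
       (r = 2*k+1 ∧ t+1 < cs.length ∧ (Xw k a b cs)[i]? = some b)) := by
  match cs with
  | [] => simp [Xw] at hi
  | c :: cs =>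
    have hXc : Xw k a b (c::cs) = blk k a c ++ Yw k a b cs := rfl
    by_cases hcase : i < 2*k+1
    · have hget : (Xw k a b (c::cs))[i]? = (blk k a c)[i]? := by
        rw [hXc, List.getElem?_append_left (by simp; omega)]
      rw [hget, blk_get]
      refine ⟨0, by simp, i, by omega, by omega, ?_⟩
      by_cases h1 : i < k
      · left; exact ⟨by omega, by omega, by simp [h1]⟩
      · by_cases h2 : i = k
        · right; left; exact ⟨h2, by simp [h1, h2]⟩
        · left; refine ⟨by omega, by omega, ?_⟩
          have h3 : i < 2*k+1 := hcase
          simp [h1, h2, h3]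
    · have hY : i - (2*k+1) < (Yw k a b cs).length := by
        rw [hXc] at hi
        simp only [List.length_append, length_blk, length_Yw] at hi
        rw [length_Yw]; omega
      obtain ⟨t, ht, r, hr, hir, hsym⟩ := Yw_get k a b cs _ hY
      have hget : (Xw k a b (c::cs))[i]? = (Yw k a b cs)[i-(2*k+1)]? := by
        rw [hXc, List.getElem?_append_right (by simp; omega)]; simp
      have hring : (t+1)*(2*k+2) = t*(2*k+2) + (2*k+2) := by ring
      rcases hsym with ⟨h0, hs⟩ | ⟨h1, h2, hs⟩ | ⟨h1, hs⟩
      · refine ⟨t, by simp; omega, 2*k+1, by omega, by omega, ?_⟩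
        right; right; refine ⟨rfl, by simp; omega, by rw [hget]; exact hs⟩
      · refine ⟨t+1, by simp; omega, r-1, by omega, by omega, ?_⟩
        left; exact ⟨by omega, by omega, by rw [hget]; exact hs⟩
      · refine ⟨t+1, by simp; omega, k, by omega, by omega, ?_⟩
        right; left; refine ⟨rfl, ?_⟩; rw [hget, hs]; simp

lemma near_arith {k t s r r' : ℕ} (hr : r = k ∨ r = 2*k+1) (hr' : r' = k ∨ r' = 2*k+1)
    (h₁ : t*(2*k+2)+r < s*(2*k+2)+r'+k) (h₂ : s*(2*k+2)+r' < t*(2*k+2)+r+k) :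
    t = s ∧ r = r' := by
  have hrb : k ≤ r ∧ r ≤ 2*k+1 := by rcases hr with rfl | rfl <;> omega
  have hrb' : k ≤ r' ∧ r' ≤ 2*k+1 := by rcases hr' with rfl | rfl <;> omega
  have hts : t = s := by
    rcases lt_trichotomy t s with h | h | h
    · have h3 : (t+1)*(2*k+2) ≤ s*(2*k+2) := Nat.mul_le_mul_right _ (by omega)
      have h4 : (t+1)*(2*k+2) = t*(2*k+2) + (2*k+2) := by ring
      omega
    · exact h
    · have h3 : (s+1)*(2*k+2) ≤ t*(2*k+2) := Nat.mul_le_mul_right _ (by omega)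
      have h4 : (s+1)*(2*k+2) = s*(2*k+2) + (2*k+2) := by ring
      omega
  subst hts
  refine ⟨rfl, ?_⟩
  rcases hr with rfl | rfl <;> rcases hr' with rfl | rfl <;> omega

lemma pair_analysis (hab : a ≠ b) (cs cs' : List A) (hlen : cs.length = cs'.length)
    (i j : ℕ) (x : A) (hxi : (Xw k a b cs)[i]? = some x) (hxj : (Xw k a b cs')[j]? = some x)
    (hxa : x ≠ a) (h₁ : i < j + k) (h₂ : j < i + k) :
    i = j ∧ ∃ t, ∃ ht : t < cs.length, ∃ ht' : t < cs'.length,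
      ((i = t*(2*k+2)+k ∧ cs[t]'ht = x ∧ cs'[t]'ht' = x) ∨
       (i = t*(2*k+2)+(2*k+1) ∧ t+1 < cs.length ∧ x = b)) := by
  have hi : i < (Xw k a b cs).length := by
    by_contra h
    rw [List.getElem?_eq_none (by omega)] at hxi; simp at hxi
  have hj : j < (Xw k a b cs').length := by
    by_contra h
    rw [List.getElem?_eq_none (by omega)] at hxj; simp at hxj
  obtain ⟨t, ht, r, hr, hir, hsym⟩ := Xw_get k a b cs i hi
  obtain ⟨s, hs, r', hr', hjr, hsym'⟩ := Xw_get k a b cs' j hj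
  rcases hsym with ⟨h0a, h0b, hv⟩ | ⟨hrk, hv⟩ | ⟨hrk, htt, hv⟩
  · rw [hv] at hxi; exact absurd (Option.some_injective _ hxi).symm hxa
  all_goals rcases hsym' with ⟨h0a', h0b', hv'⟩ | ⟨hrk', hv'⟩ | ⟨hrk', htt', hv'⟩
  · rw [hv'] at hxj; exact absurd (Option.some_injective _ hxj).symm hxa
  · -- letter / letter
    obtain ⟨rfl, hrr⟩ := near_arith (k := k) (t := t) (s := s) (r := r) (r' := r')
      (Or.inl hrk) (Or.inl hrk') (by omega) (by omega)
    refine ⟨by omega, t, ht, hs, Or.inl ⟨by omega, ?_, ?_⟩⟩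
    · rw [hv] at hxi; exact (Option.some_injective _ hxi)
    · rw [hv'] at hxj; exact (Option.some_injective _ hxj)
  · -- letter / separator : impossible
    obtain ⟨rfl, hrr⟩ := near_arith (k := k) (t := t) (s := s) (r := r) (r' := r')
      (Or.inl hrk) (Or.inr hrk') (by omega) (by omega)
    omega
  · rw [hv'] at hxj; exact absurd (Option.some_injective _ hxj).symm hxa
  · -- separator / letter : impossible
    obtain ⟨rfl, hrr⟩ := near_arith (k := k) (t := t) (s := s) (r := r) (r' := r')
      (Or.inr hrk) (Or.inl hrk') (by omega) (by omega)
    omega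
  · -- separator / separator
    obtain ⟨rfl, hrr⟩ := near_arith (k := k) (t := t) (s := s) (r := r) (r' := r')
      (Or.inr hrk) (Or.inr hrk') (by omega) (by omega)
    rw [hv] at hxi
    exact ⟨by omega, t, ht, by omega, Or.inr ⟨by omega, htt,
      (Option.some_injective _ hxi).symm⟩⟩

lemma pos_countP {β : Type*} (w : List β) (p : β → Bool) :
    ((List.range w.length).filter (fun i => (w[i]?.map p).getD false)).length = w.countP p := by
  induction w using List.reverseRecOn with
  | nil => simp
  | append_singleton w x ih =>
    rw [List.length_append, List.length_singleton, List.range_succ, List.filter_append,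
      List.length_append, List.countP_append]
    have h1 : List.filter (fun i => (((w ++ [x])[i]?).map p).getD false) (List.range w.length)
        = List.filter (fun i => ((w[i]?).map p).getD false) (List.range w.length) := by
      apply List.filter_congr
      intro i hi
      rw [List.mem_range] at hi
      rw [List.getElem?_append_left hi]
    have h2 : (w ++ [x])[w.length]? = some x := by
      rw [List.getElem?_append_right (le_refl _)]
      simp
    have h3 : List.countP p [x] = if p x then 1 else 0 := by
      cases hpx : p x <;> simp [List.countP_cons, hpx]
    have h4 : (List.filter (fun i => (((w++[x])[i]?).map p).getD false) [w.length]).length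
        = if p x then 1 else 0 := by
      rw [List.filter_singleton]
      cases hpx : p x <;> simp [h2, hpx]
    rw [h1, ih, h3, h4]

lemma sorted_count {β : Type*} (w : List β) (p : β → Bool) (l : List ℕ)
    (hl : l.Pairwise (· < ·)) (hmem : ∀ i ∈ l, ∃ x, w[i]? = some x ∧ p x) :
    l.length ≤ w.countP p := by
  rw [← pos_countP]
  have hnd : l.Nodup := hl.imp (fun h => Nat.ne_of_lt h)
  have hnd2 : ((List.range w.length).filter
      (fun i => ((w[i]?).map p).getD false)).Nodup := (List.nodup_range).filter _
  have hsub : l ⊆ (List.range w.length).filter (fun i => ((w[i]?).map p).getD false) := by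
    intro i hi
    obtain ⟨x, hx, hp⟩ := hmem i hi
    rw [List.mem_filter, List.mem_range]
    constructor
    · by_contra h
      rw [List.getElem?_eq_none (by omega)] at hx; simp at hx
    · rw [hx]; simpa using hp
  calc l.length = l.toFinset.card := (List.toFinset_card_of_nodup hnd).symm
    _ ≤ _ := Finset.card_le_card
        (fun i hi => List.mem_toFinset.mpr (hsub (List.mem_toFinset.mp hi)))
    _ = _ := List.toFinset_card_of_nodup hnd2

lemma countP_split {β : Type*} (l : List β) (p q : β → Bool) :
    l.countP p = l.countP (fun x => p x && q x) + l.countP (fun x => p x && !q x) := by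
  induction l with
  | nil => simp
  | cons x l ih =>
    simp only [List.countP_cons, ih]
    cases hp : p x <;> cases hq : q x <;> simp <;> omega

lemma length_filter_split {β : Type*} (l : List β) (p : β → Bool) :
    l.length = (l.filter p).length + (l.filter (fun x => !p x)).length := by
  induction l with
  | nil => rfl
  | cons x l ih => cases hp : p x <;> simp [List.filter_cons, hp, ih] <;> omega

lemma countP_eq_count (l : List A) : l.countP (fun x => x == a) = l.count a := by
  induction l with
  | nil => simp
  | cons c l ih => simp [List.countP_cons, List.count_cons, ih]

lemma count_zip_left (cs cs' : List A) (h : cs.length = cs'.length) :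
    cs.count a = (cs.zip cs').countP (fun q => q.1 == a) := by
  induction cs generalizing cs' with
  | nil => simp
  | cons c cs ih =>
    match cs' with
    | c' :: cs' =>
      simp only [List.zip_cons_cons, List.countP_cons, List.count_cons]
      rw [ih cs' (by simpa using h)]

lemma count_zip_right (cs cs' : List A) (h : cs.length = cs'.length) :
    cs'.count a = (cs.zip cs').countP (fun q => q.2 == a) := by
  induction cs generalizing cs' with
  | nil =>
    match cs' with
    | [] => simp
  | cons c cs ih =>
    match cs' with
    | c' :: cs' =>
      simp only [List.zip_cons_cons, List.countP_cons, List.count_cons]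
      rw [ih cs' (by simpa using h)]

lemma zip_count_ineq (zs : List (A × A)) (hne : zs ≠ []) :
    zs.countP (fun q => q.1 == q.2 && !(q.1 == a)) + zs.countP (fun p => decide (p.1 ≠ p.2))
      + min (zs.countP (fun q => q.1 == a)) (zs.countP (fun q => q.2 == a))
      ≤ 2 * zs.length - 1 := by
  have hlen1 : 1 ≤ zs.length := List.length_pos_iff.mpr hne
  have c1 : zs.countP (fun q => decide (q.1 ≠ q.2)) = zs.countP (fun q => !(q.1 == q.2)) :=
    List.countP_congr (by intro x _; simp)
  have s1 := countP_split zs (fun q => q.1 == q.2) (fun q => q.1 == a)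
  have s2 := length_filter_split zs (fun q => q.1 == q.2)
  have s2a : (zs.filter (fun q => q.1 == q.2)).length = zs.countP (fun q => q.1 == q.2) :=
    (List.countP_eq_length_filter).symm
  have s2b : (zs.filter (fun q => !(q.1 == q.2))).length = zs.countP (fun q => !(q.1 == q.2)) :=
    (List.countP_eq_length_filter).symm
  have s3 := countP_split zs (fun q => q.1 == a) (fun q => q.1 == q.2)
  have s4 := countP_split zs (fun q => q.2 == a) (fun q => q.1 == q.2)
  have s5 := countP_split zs (fun q => !(q.1 == q.2)) (fun q => q.1 == a)
  have c2 : zs.countP (fun q => (q.1 == a) && (q.1 == q.2))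
      = zs.countP (fun q => (q.1 == q.2) && (q.1 == a)) :=
    List.countP_congr (by intro x _; simp [Bool.and_comm])
  have c3 : zs.countP (fun q => (q.2 == a) && (q.1 == q.2))
      = zs.countP (fun q => (q.1 == q.2) && (q.1 == a)) := by
    apply List.countP_congr
    intro x _
    by_cases h : x.1 = x.2 <;> simp [h]
  have c4 : zs.countP (fun q => (q.1 == a) && !(q.1 == q.2))
      = zs.countP (fun q => !(q.1 == q.2) && (q.1 == a)) :=
    List.countP_congr (by intro x _; simp [Bool.and_comm])
  have m1 : zs.countP (fun q => (q.2 == a) && !(q.1 == q.2))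
      ≤ zs.countP (fun q => !(q.1 == q.2) && !(q.1 == a)) := by
    apply List.countP_mono_left
    intro x _ h
    simp only [Bool.and_eq_true, beq_iff_eq, Bool.not_eq_true', beq_eq_false_iff_ne] at h ⊢
    refine ⟨h.2, ?_⟩
    intro hxa
    exact h.2 (by rw [hxa, h.1])
  rw [c1] at *
  omega

lemma hammingDistL_append (x y u v : List A) (h : x.length = y.length) :
    hammingDistL (x ++ u) (y ++ v) = hammingDistL x y + hammingDistL u v := by
  unfold hammingDistL
  rw [List.zip_append h, List.countP_append]

lemma hammingDistL_self (x : List A) : hammingDistL x x = 0 := by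
  induction x with
  | nil => rfl
  | cons c x ih => simpa [hammingDistL, List.countP_cons] using ih

theorem core (hab : a ≠ b) (hk : 1 ≤ k) :
    ∀ g : ℕ, ∀ cs cs' : List A, cs.length = g → cs'.length = g →
    ∀ P : List (ℕ × ℕ),
    P.Pairwise (fun p q => p.1 < q.1 ∧ p.2 < q.2) →
    (∀ p ∈ P, ∃ x, (Xw k a b cs)[p.1]? = some x ∧ (Xw k a b cs')[p.2]? = some x) →
    (∀ p ∈ P, p.1 < p.2 + k ∧ p.2 < p.1 + k) →
    P.length + hammingDistL cs cs' ≤ (Xw k a b cs).length := by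
  intro g
  induction g using Nat.strong_induction_on with
  | _ g IH =>
  intro cs cs' hg hg' P hpw hmem hshift
  rcases eq_or_ne cs [] with rfl | hcs
  · have hcs' : cs' = [] := List.length_eq_zero_iff.mp (by simp at hg; omega)
    subst hcs'
    have hP : P = [] := by
      cases P with
      | nil => rfl
      | cons p P =>
        obtain ⟨x, hx, -⟩ := hmem p (List.mem_cons_self)
        simp [Xw] at hx
    subst hP
    simp [hammingDistL, Xw]
  · have hg1 : 1 ≤ g := by
      have := List.length_pos_iff.mpr hcs; omega
    have hcs' : cs' ≠ [] := by
      intro h; subst h; simp at hg'; omega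
    by_cases hsep : ∃ p ∈ P, p.1 = p.2 ∧ ∃ t, t + 1 < cs.length ∧ p.1 = t*(2*k+2) + (2*k+1)
    · -- Case 1 : split at a matched separator
      obtain ⟨p, hpP, hpe, t, htl, hpt⟩ := hsep
      have ht1g : t + 1 < g := by omega
      have hlen₁ : (cs.take (t+1)).length = t+1 := by rw [List.length_take]; omega
      have hlen₁' : (cs'.take (t+1)).length = t+1 := by rw [List.length_take]; omega
      have hlen₂ : (cs.drop (t+1)).length = g - (t+1) := by rw [List.length_drop]; omega
      have hlen₂' : (cs'.drop (t+1)).length = g - (t+1) := by rw [List.length_drop]; omega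
      have hne₁ : cs.take (t+1) ≠ [] := by
        intro h; rw [h] at hlen₁; simp at hlen₁
      have hne₂ : cs.drop (t+1) ≠ [] := by
        intro h; rw [h] at hlen₂; simp at hlen₂; omega
      have hne₁' : cs'.take (t+1) ≠ [] := by
        intro h; rw [h] at hlen₁'; simp at hlen₁'
      have hne₂' : cs'.drop (t+1) ≠ [] := by
        intro h; rw [h] at hlen₂'; simp at hlen₂'; omega
      have hcssplit : cs = cs.take (t+1) ++ cs.drop (t+1) := (List.take_append_drop _ _).symm
      have hcssplit' : cs' = cs'.take (t+1) ++ cs'.drop (t+1) := (List.take_append_drop _ _).symm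
      have hXsplit : Xw k a b cs
          = (Xw k a b (cs.take (t+1)) ++ [b]) ++ Xw k a b (cs.drop (t+1)) := by
        conv_lhs => rw [hcssplit]
        rw [Xw_append k a b _ _ hne₁ hne₂]; simp
      have hXsplit' : Xw k a b cs'
          = (Xw k a b (cs'.take (t+1)) ++ [b]) ++ Xw k a b (cs'.drop (t+1)) := by
        conv_lhs => rw [hcssplit']
        rw [Xw_append k a b _ _ hne₁' hne₂']; simp
      have hring : (t+1)*(2*k+2) = t*(2*k+2) + (2*k+2) := by ring
      have hX1len : (Xw k a b (cs.take (t+1))).length = p.1 := by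
        have h := length_Xw k a b (cs.take (t+1)) hne₁
        rw [hlen₁] at h; omega
      have hX1len' : (Xw k a b (cs'.take (t+1))).length = p.2 := by
        have h := length_Xw k a b (cs'.take (t+1)) hne₁'
        rw [hlen₁'] at h; omega
      have hX1blen : (Xw k a b (cs.take (t+1)) ++ [b]).length = p.1 + 1 := by
        simp [hX1len]
      have hX1blen' : (Xw k a b (cs'.take (t+1)) ++ [b]).length = p.2 + 1 := by
        simp [hX1len']
      obtain ⟨l₁, l₂, rfl⟩ := List.append_of_mem hpP
      rw [List.pairwise_append] at hpw
      obtain ⟨hpw₁, hpwc, hcross⟩ := hpw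
      rw [List.pairwise_cons] at hpwc
      obtain ⟨hpl₂, hpw₂⟩ := hpwc
      -- sub-matching on the left part
      have H1 := IH (t+1) (by omega) (cs.take (t+1)) (cs'.take (t+1)) hlen₁ hlen₁' l₁ hpw₁ ?_ ?_
      rotate_left
      · intro q hq
        obtain ⟨x, hx1, hx2⟩ := hmem q (List.mem_append_left _ hq)
        have hqp := hcross q hq p (List.mem_cons_self)
        refine ⟨x, ?_, ?_⟩
        · rw [hXsplit] at hx1
          rw [List.getElem?_append_left (by rw [hX1blen]; omega)] at hx1
          rwa [List.getElem?_append_left (by rw [hX1len]; omega)] at hx1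
        · rw [hXsplit'] at hx2
          rw [List.getElem?_append_left (by rw [hX1blen']; omega)] at hx2
          rwa [List.getElem?_append_left (by rw [hX1len']; omega)] at hx2
      · intro q hq
        exact hshift q (List.mem_append_left _ hq)
      -- sub-matching on the right part
      have H2 := IH (g - (t+1)) (by omega) (cs.drop (t+1)) (cs'.drop (t+1)) hlen₂ hlen₂'
          (l₂.map (fun q => (q.1 - (p.1+1), q.2 - (p.1+1)))) ?_ ?_ ?_
      rotate_left
      · rw [List.pairwise_map]
        refine List.Pairwise.imp_of_mem ?_ hpw₂
        intro q q' hq hq' hR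
        have h1 := hpl₂ q hq
        have h2 := hpl₂ q' hq'
        exact ⟨by omega, by omega⟩
      · intro q' hq'
        rw [List.mem_map] at hq'
        obtain ⟨q, hq, rfl⟩ := hq'
        obtain ⟨x, hx1, hx2⟩ := hmem q (List.mem_append_right _ (List.mem_cons_of_mem _ hq))
        have hpq := hpl₂ q hq
        refine ⟨x, ?_, ?_⟩
        · rw [hXsplit] at hx1
          rw [List.getElem?_append_right (by rw [hX1blen]; omega), hX1blen] at hx1
          exact hx1
        · rw [hXsplit'] at hx2
          rw [List.getElem?_append_right (by rw [hX1blen']; omega), hX1blen'] at hx2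
          have : q.2 - (p.2 + 1) = q.2 - (p.1 + 1) := by omega
          rwa [this] at hx2
      · intro q' hq'
        rw [List.mem_map] at hq'
        obtain ⟨q, hq, rfl⟩ := hq'
        have hpq := hpl₂ q hq
        have := hshift q (List.mem_append_right _ (List.mem_cons_of_mem _ hq))
        constructor <;> simp <;> omega
      -- combine
      have hHam : hammingDistL cs cs'
          = hammingDistL (cs.take (t+1)) (cs'.take (t+1))
            + hammingDistL (cs.drop (t+1)) (cs'.drop (t+1)) := by
        conv_lhs => rw [hcssplit, hcssplit']
        exact hammingDistL_append _ _ _ _ (by rw [hlen₁, hlen₁'])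
      have hXlen2 : (Xw k a b cs).length
          = p.1 + 1 + (Xw k a b (cs.drop (t+1))).length := by
        rw [hXsplit]; simp [hX1len]; omega
      have hPlen : (l₁ ++ p :: l₂).length = l₁.length + l₂.length + 1 := by simp; omega
      have hmaplen : (l₂.map (fun q => (q.1 - (p.1+1), q.2 - (p.1+1)))).length = l₂.length := by
        simp
      omega
    · -- Case 2 : no separator is matched
      have hPana : ∀ p ∈ P, ((Xw k a b cs)[p.1]? = some a ∧ (Xw k a b cs')[p.2]? = some a) ∨
          (∃ t, ∃ ht : t < cs.length, ∃ ht' : t < cs'.length, p.1 = t*(2*k+2)+k ∧ p.2 = p.1 ∧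
            cs[t]'ht = cs'[t]'ht' ∧ cs[t]'ht ≠ a) := by
        intro p hp
        obtain ⟨x, hx1, hx2⟩ := hmem p hp
        rcases eq_or_ne x a with rfl | hxa
        · left; exact ⟨hx1, hx2⟩
        · right
          obtain ⟨hij, t, ht, ht', hcase⟩ := pair_analysis k a b hab cs cs' (by omega)
            p.1 p.2 x hx1 hx2 hxa (hshift p hp).1 (hshift p hp).2
          rcases hcase with ⟨h1, h2, h3⟩ | ⟨h1, h2, h3⟩
          · exact ⟨t, ht, ht', h1, hij.symm, by rw [h2, h3], by rw [h2]; exact hxa⟩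
          · exact absurd ⟨p, hp, hij, t, h2, h1⟩ hsep
      set Pa := P.filter (fun p => decide ((Xw k a b cs)[p.1]? = some a)) with hPadef
      set Pna := P.filter (fun p => !decide ((Xw k a b cs)[p.1]? = some a)) with hPnadef
      have hPlen : P.length = Pa.length + Pna.length :=
        length_filter_split P _
      have hPaP : Pa.Pairwise (fun p q => p.1 < q.1 ∧ p.2 < q.2) :=
        List.Pairwise.sublist (List.filter_sublist) hpw
      have hPnaP : Pna.Pairwise (fun p q => p.1 < q.1 ∧ p.2 < q.2) :=
        List.Pairwise.sublist (List.filter_sublist) hpw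
      -- Bound |Pa| by number of a's on each side
      have hPaU : Pa.length ≤ (Xw k a b cs).count a := by
        have h := sorted_count (Xw k a b cs) (fun x => x == a) (Pa.map (·.1)) ?_ ?_
        · rwa [List.length_map, countP_eq_count] at h
        · rw [List.pairwise_map]
          exact hPaP.imp (fun h => h.1)
        · intro j hj
          rw [List.mem_map] at hj
          obtain ⟨q, hq, rfl⟩ := hj
          rw [hPadef, List.mem_filter] at hq
          refine ⟨a, by simpa using hq.2, by simp⟩
      have hPaV : Pa.length ≤ (Xw k a b cs').count a := by
        have h := sorted_count (Xw k a b cs') (fun x => x == a) (Pa.map (·.2)) ?_ ?_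
        · rwa [List.length_map, countP_eq_count] at h
        · rw [List.pairwise_map]
          exact hPaP.imp (fun h => h.2)
        · intro j hj
          rw [List.mem_map] at hj
          obtain ⟨q, hq, rfl⟩ := hj
          rw [hPadef, List.mem_filter] at hq
          obtain ⟨x, hx1, hx2⟩ := hmem q hq.1
          have hxa : x = a := by
            have := hq.2
            simp only [decide_eq_true_eq] at this
            rw [this] at hx1
            exact (Option.some_injective _ hx1).symm
          subst hxa
          exact ⟨x, hx2, by simp⟩
      -- every pair in Pna is a matched equal letter pair (equal, non-a)
      have hPna_t : ∀ q ∈ Pna, ∃ t, t < cs.length ∧ q.1 = t*(2*k+2)+k ∧ q.1 / (2*k+2) = t ∧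
          (∃ ht : t < cs.length, ∃ ht' : t < cs'.length,
            cs[t]'ht = cs'[t]'ht' ∧ cs[t]'ht ≠ a) := by
        intro q hq
        rw [hPnadef, List.mem_filter] at hq
        obtain ⟨hqP, hqpred⟩ := hq
        rcases hPana q hqP with ⟨h1, h2⟩ | ⟨t, ht, ht', h1, h2, h3, h4⟩
        · rw [h1] at hqpred; simp at hqpred
        · refine ⟨t, ht, h1, ?_, ht, ht', h3, h4⟩
          have he : t*(2*k+2)+k = k + (2*k+2)*t := by ring
          rw [h1, he, Nat.add_mul_div_left _ _ (show 0 < 2*k+2 by omega),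
            Nat.div_eq_of_lt (show k < 2*k+2 by omega)]
          omega
      have hPnaB : Pna.length
          ≤ (cs.zip cs').countP (fun q => q.1 == q.2 && !(q.1 == a)) := by
        have h := sorted_count (cs.zip cs') (fun q => q.1 == q.2 && !(q.1 == a))
          (Pna.map (fun q => q.1 / (2*k+2))) ?_ ?_
        · rwa [List.length_map] at h
        · rw [List.pairwise_map]
          refine List.Pairwise.imp_of_mem ?_ hPnaP
          intro q q' hq hq' hR
          obtain ⟨t, ht, h1, h2, -⟩ := hPna_t q hq
          obtain ⟨t', ht', h1', h2', -⟩ := hPna_t q' hq'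
          rw [h2, h2']
          have hmul : t*(2*k+2) < t'*(2*k+2) := by omega
          exact lt_of_mul_lt_mul_right hmul (by omega)
        · intro tt htt
          rw [List.mem_map] at htt
          obtain ⟨q, hq, rfl⟩ := htt
          obtain ⟨t, ht, h1, h2, hta, hta', h3, h4⟩ := hPna_t q hq
          rw [h2]
          refine ⟨(cs[t]'hta, cs'[t]'hta'), ?_, ?_⟩
          · rw [List.getElem?_zip_eq_some]
            exact ⟨List.getElem?_eq_getElem hta, List.getElem?_eq_getElem hta'⟩
          · simp [h3, h4]
            rw [← h3]
            exact h4
      -- final counting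
      have hcu := count_Xw k a b cs hab
      have hcv := count_Xw k a b cs' hab
      have hzlen : (cs.zip cs').length = g := by
        rw [List.length_zip]; omega
      have hzipne : cs.zip cs' ≠ [] := by
        intro h; rw [h] at hzlen; simp at hzlen; omega
      have hineq := zip_count_ineq a (cs.zip cs') hzipne
      have hc1 := count_zip_left a cs cs' (by omega)
      have hc2 := count_zip_right a cs cs' (by omega)
      have hXlen := length_Xw k a b cs hcs
      have hham : hammingDistL cs cs' = (cs.zip cs').countP (fun p => decide (p.1 ≠ p.2)) := rfl
      rw [hg] at hcu hXlen
      rw [hg'] at hcv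
      have hring : g*(2*k+2) = g*(2*k) + 2*g := by ring
      omega



/-! ### word stretching lemmas -/

lemma st_foldl (B : List A) (w : List A) (acc : List A) :
    w.foldl (fun acc c => acc ++ B ++ [c]) acc
      = acc ++ w.foldl (fun acc c => acc ++ B ++ [c]) [] := by
  induction w generalizing acc with
  | nil => simp
  | cons c w ih =>
    simp only [List.foldl_cons]
    rw [ih, ih (([] : List A) ++ B ++ [c])]
    simp

lemma st_cons (c : A) (w B : List A) : st (c :: w) B = B ++ [c] ++ st w B := by
  unfold st
  simp only [List.foldl_cons]
  rw [st_foldl B w]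
  simp

lemma length_st (w B : List A) : (st w B).length = w.length * (B.length + 1) := by
  induction w with
  | nil => simp [st]
  | cons c w ih => rw [st_cons]; simp [ih]; ring

lemma st_Yw (w : List A) :
    st w (List.replicate k a ++ [b] ++ List.replicate k a) ++ List.replicate k a
      = List.replicate k a ++ Yw k a b w := by
  induction w with
  | nil => simp [st]
  | cons c w ih =>
    calc st (c :: w) (List.replicate k a ++ [b] ++ List.replicate k a) ++ List.replicate k a
        = (List.replicate k a ++ [b] ++ List.replicate k a) ++ [c]
            ++ (st w (List.replicate k a ++ [b] ++ List.replicate k a)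
              ++ List.replicate k a) := by
          rw [st_cons]; simp
      _ = (List.replicate k a ++ [b] ++ List.replicate k a) ++ [c]
            ++ (List.replicate k a ++ Yw k a b w) := by rw [ih]
      _ = List.replicate k a ++ Yw k a b (c :: w) := by simp [Yw_cons, blk]

lemma blk_a : blk k a a = List.replicate (2*k+1) a := by
  have h : 2*k+1 = k + (k+1) := by omega
  simp [blk, h, List.replicate_add, List.replicate_succ]

lemma pad_eq (w : List A) :
    Xw k a b (a :: w)
      = List.replicate (k+1) a ++ (st w (List.replicate k a ++ [b] ++ List.replicate k a)
          ++ List.replicate k a) := by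
  rw [Xw_cons, blk_a, st_Yw k a b w, ← List.append_assoc, ← List.replicate_add]
  have h : k+1+k = 2*k+1 := by omega
  rw [h]

/-! ### Hamming distance lemmas -/

lemma hammingDistL_cons (c c' : A) (u v : List A) :
    hammingDistL (c::u) (c'::v) = hammingDistL u v + (if c = c' then 0 else 1) := by
  simp only [hammingDistL, List.zip_cons_cons, List.countP_cons]
  by_cases h : c = c' <;> simp [h]

lemma hamming_st (B : List A) : ∀ w₁ w₂ : List A, w₁.length = w₂.length →
    hammingDistL (st w₁ B) (st w₂ B) = hammingDistL w₁ w₂ := by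
  intro w₁
  induction w₁ with
  | nil =>
    intro w₂ h
    have : w₂ = [] := List.length_eq_zero_iff.mp h.symm
    subst this
    simp [st, hammingDistL]
  | cons c w₁ ih =>
    intro w₂ h
    match w₂ with
    | c' :: w₂ =>
      rw [st_cons, st_cons]
      have h' : w₁.length = w₂.length := by simpa using h
      rw [hammingDistL_append (B ++ [c]) (B ++ [c']) _ _ (by simp)]
      rw [ih w₂ h']
      have h1 : hammingDistL (B ++ [c]) (B ++ [c']) = hammingDistL [c] [c'] := by
        rw [hammingDistL_append B B [c] [c'] rfl, hammingDistL_self]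
        omega
      have h2 : hammingDistL [c] [c'] = if c = c' then 0 else 1 := by
        by_cases hcc : c = c' <;> simp [hammingDistL, hcc]
      rw [h1, h2, hammingDistL_cons]
      omega

/-! ### Levenshtein distance lemmas -/

lemma lev_nil_left (θ : ℝ) (v : List A) : lev 1 θ [] v = v.length := by
  induction v with
  | nil => simp [lev]
  | cons y v ih =>
    have h : lev 1 θ ([]:List A) (y::v) = 1 + lev 1 θ [] v := by
      simp [lev, levCost]
    rw [h, ih]
    push_cast [List.length_cons]
    ring

lemma lev_nil_right (θ : ℝ) (u : List A) : lev 1 θ u [] = u.length := by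
  induction u with
  | nil => simp [lev]
  | cons x u ih =>
    have h : lev 1 θ (x::u) [] = 1 + lev 1 θ u [] := by
      simp [lev, levCost]
    rw [h, ih]
    push_cast [List.length_cons]
    ring

lemma lev_cons_cons (θ : ℝ) (x y : A) (u v : List A) :
    lev 1 θ (x::u) (y::v) = min (1 + lev 1 θ u (y::v))
      (min (1 + lev 1 θ (x::u) v) ((if x = y then 0 else θ) + lev 1 θ u v)) := by
  unfold lev
  rw [levenshtein_cons_cons]
  rfl

lemma lev_le_hamming (θ : ℝ) (hθ0 : 0 ≤ θ) : ∀ u v : List A, u.length = v.length →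
    lev 1 θ u v ≤ θ * hammingDistL u v := by
  intro u
  induction u with
  | nil =>
    intro v hv
    have : v = [] := List.length_eq_zero_iff.mp hv.symm
    subst this
    simp [lev, hammingDistL]
  | cons x u ih =>
    intro v hv
    match v with
    | y :: v =>
      have hlen : u.length = v.length := by simpa using hv
      have h := ih v hlen
      rw [lev_cons_cons]
      have hham : hammingDistL (x::u) (y::v) = hammingDistL u v + (if x = y then 0 else 1) :=
        hammingDistL_cons x y u v
      calc min (1 + lev 1 θ u (y::v)) (min (1 + lev 1 θ (x::u) v)
              ((if x = y then 0 else θ) + lev 1 θ u v))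
          ≤ (if x = y then 0 else θ) + lev 1 θ u v :=
            le_trans (min_le_right _ _) (min_le_right _ _)
        _ ≤ θ * hammingDistL (x::u) (y::v) := by
            rw [hham]
            push_cast
            split_ifs with hxy
            · simpa using h
            · nlinarith [h]

lemma lev_lb (θ : ℝ) (hθ0 : 0 < θ) (hθ2 : θ ≤ 2) : ∀ u v : List A, ∃ m : List A,
    m.Sublist u ∧ m.Sublist v ∧
      θ*((u.length : ℝ) + (v.length : ℝ)) ≤ 2 * lev 1 θ u v + 2*θ*(m.length : ℝ) := by
  intro u
  induction u with
  | nil =>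
    intro v
    refine ⟨[], List.nil_sublist _, List.nil_sublist _, ?_⟩
    rw [lev_nil_left]
    have h0 : (0:ℝ) ≤ (v.length : ℝ) := by positivity
    push_cast
    nlinarith
  | cons x u ihu =>
    intro v
    induction v with
    | nil =>
      refine ⟨[], List.nil_sublist _, List.nil_sublist _, ?_⟩
      rw [lev_nil_right]
      have h0 : (0:ℝ) ≤ ((x::u).length : ℝ) := by positivity
      push_cast at h0 ⊢
      nlinarith
    | cons y v ihv =>
      rcases min_cases (1 + lev 1 θ u (y::v)) (min (1 + lev 1 θ (x::u) v)
          ((if x = y then 0 else θ) + lev 1 θ u v)) with ⟨hmin, -⟩ | ⟨hmin, -⟩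
      · obtain ⟨m, s1, s2, hm⟩ := ihu (y::v)
        refine ⟨m, List.Sublist.cons _ s1, s2, ?_⟩
        rw [lev_cons_cons, hmin]
        push_cast [List.length_cons] at hm ⊢
        linarith
      · rcases min_cases (1 + lev 1 θ (x::u) v)
            ((if x = y then 0 else θ) + lev 1 θ u v) with ⟨hmin2, -⟩ | ⟨hmin2, -⟩
        · obtain ⟨m, s1, s2, hm⟩ := ihv
          refine ⟨m, s1, List.Sublist.cons _ s2, ?_⟩
          rw [lev_cons_cons, hmin, hmin2]
          push_cast [List.length_cons] at hm ⊢
          linarith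
        · obtain ⟨m, s1, s2, hm⟩ := ihu v
          by_cases hxy : x = y
          · subst hxy
            refine ⟨x :: m, List.Sublist.cons₂ _ s1, List.Sublist.cons₂ _ s2, ?_⟩
            rw [lev_cons_cons, hmin, hmin2, if_pos rfl]
            push_cast [List.length_cons] at hm ⊢
            linarith
          · refine ⟨m, List.Sublist.cons _ s1, List.Sublist.cons _ s2, ?_⟩
            rw [lev_cons_cons, hmin, hmin2, if_neg hxy]
            push_cast [List.length_cons] at hm ⊢
            linarith

end St7

/-- For words `w₁, w₂` of equal length, `k > h(w₁, w₂)`, distinct letters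
`a ≠ b`, and `θ ∈ (0, 2]`,
`lev_θ(st(w₁, aᵏbaᵏ), st(w₂, aᵏbaᵏ)) = θ · h(w₁, w₂)`. -/
theorem stmt_7 {A : Type*} [Fintype A] [DecidableEq A] (w₁ w₂ : List A)
    (hlen : w₁.length = w₂.length) (k : ℕ) (hk : hammingDistL w₁ w₂ < k)
    (a b : A) (hab : a ≠ b) (θ : ℝ) (hθ : θ ∈ Set.Ioc (0 : ℝ) 2) :
    lev 1 θ (st w₁ (List.replicate k a ++ [b] ++ List.replicate k a))
        (st w₂ (List.replicate k a ++ [b] ++ List.replicate k a))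
      = θ * hammingDistL w₁ w₂ := by
  obtain ⟨hθ0, hθ2⟩ := hθ
  have hk1 : 1 ≤ k := by omega
  set B : List A := List.replicate k a ++ [b] ++ List.replicate k a with hBdef
  have hBlen : B.length = 2*k+1 := by simp [hBdef]; omega
  have hul : (st w₁ B).length = w₁.length * (2*k+2) := by rw [St7.length_st, hBlen]
  have hvl : (st w₂ B).length = w₁.length * (2*k+2) := by
    rw [St7.length_st, hBlen, ← hlen]
  apply le_antisymm
  · have h := St7.lev_le_hamming θ (le_of_lt hθ0) (st w₁ B) (st w₂ B) (by omega)
    rwa [St7.hamming_st B w₁ w₂ hlen] at h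
  · obtain ⟨m, hm1, hm2, hml⟩ := St7.lev_lb θ hθ0 hθ2 (st w₁ B) (st w₂ B)
    have hLcs : m.length + hammingDistL w₁ w₂ ≤ (st w₁ B).length := by
      by_cases hd : m.length + hammingDistL w₁ w₂ ≤ (st w₁ B).length
      · exact hd
      exfalso
      push_neg at hd
      have hmu : m.length ≤ (st w₁ B).length := hm1.length_le
      have hmv : m.length ≤ (st w₂ B).length := hm2.length_le
      set N := (st w₁ B).length with hN
      set L := m.length with hL
      obtain ⟨f, hf⟩ := List.sublist_iff_exists_fin_orderEmbedding_get_eq.mp hm1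
      obtain ⟨f', hf'⟩ := List.sublist_iff_exists_fin_orderEmbedding_get_eq.mp hm2
      have hNv : (st w₂ B).length = N := by omega
      -- bounds for strictly monotone embeddings
      have flow : ∀ (M : ℕ) (g : Fin L ↪o Fin M) (t : Fin L), (t:ℕ) ≤ (g t : ℕ) := by
        intro M g t
        have key : ∀ n : ℕ, ∀ t : Fin L, (t:ℕ) = n → n ≤ (g t : ℕ) := by
          intro n
          induction n with
          | zero => intro t ht; omega
          | succ n ihn =>
            intro t ht
            have hn : n < L := by omega
            have h1 := ihn ⟨n, hn⟩ rfl
            have h2 : g ⟨n, hn⟩ < g t := by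
              apply g.strictMono
              rw [Fin.lt_def]
              simp
              omega
            rw [Fin.lt_def] at h2
            omega
        exact key _ t rfl
      have fupp : ∀ (M : ℕ) (g : Fin L ↪o Fin M) (t : Fin L), (g t : ℕ) + (L - 1 - (t:ℕ)) ≤ M - 1 := by
        intro M g t
        have key : ∀ d : ℕ, ∀ t s : Fin L, (s:ℕ) = (t:ℕ) + d → (g t : ℕ) + d ≤ (g s : ℕ) := by
          intro d
          induction d with
          | zero =>
            intro t s hs
            have : t = s := Fin.ext (by omega)
            subst this
            omega
          | succ d ihd =>
            intro t s hs
            have hd2 : (t:ℕ) + d < L := by omega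
            have h1 := ihd t ⟨(t:ℕ)+d, hd2⟩ rfl
            have h2 : g ⟨(t:ℕ)+d, hd2⟩ < g s := by
              apply g.strictMono
              rw [Fin.lt_def]
              simp
              omega
            rw [Fin.lt_def] at h2
            omega
        have hl1 : L - 1 < L := by
          have := t.isLt
          omega
        have h1 := key (L - 1 - (t:ℕ)) t ⟨L-1, hl1⟩ (by simp; omega)
        have h2 : (g ⟨L-1, hl1⟩ : ℕ) < M := (g ⟨L-1, hl1⟩).isLt
        omega
      have hXu := St7.pad_eq k a b w₁
      have hXv := St7.pad_eq k a b w₂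
      rw [← hBdef] at hXu hXv
      set P : List (ℕ × ℕ) :=
        ((List.range (k+1)).map (fun i => (i,i)))
        ++ (((List.finRange L).map (fun t => (((f t : ℕ) + (k+1)), ((f' t : ℕ) + (k+1)))))
        ++ ((List.range k).map (fun i => (k+1+N+i, k+1+N+i)))) with hPdef
      have hpw : P.Pairwise (fun p q => p.1 < q.1 ∧ p.2 < q.2) := by
        rw [hPdef]
        rw [List.pairwise_append]
        refine ⟨?_, ?_, ?_⟩
        · rw [List.pairwise_map]
          exact (List.pairwise_lt_range).imp (fun h => ⟨h, h⟩)
        · rw [List.pairwise_append]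
          refine ⟨?_, ?_, ?_⟩
          · rw [List.pairwise_map]
            refine (List.pairwise_lt_finRange _).imp ?_
            intro t t' h
            have h1 : f t < f t' := f.strictMono h
            have h2 : f' t < f' t' := f'.strictMono h
            rw [Fin.lt_def] at h1 h2
            exact ⟨by omega, by omega⟩
          · rw [List.pairwise_map]
            exact (List.pairwise_lt_range).imp (fun h => ⟨by omega, by omega⟩)
          · intro p hp q hq
            rw [List.mem_map] at hp hq
            obtain ⟨t, -, rfl⟩ := hp
            obtain ⟨i, -, rfl⟩ := hq
            have := (f t).isLt
            have := (f' t).isLt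
            constructor <;> simp <;> omega
        · intro p hp q hq
          rw [List.mem_map] at hp
          obtain ⟨i, hi, rfl⟩ := hp
          rw [List.mem_range] at hi
          rw [List.mem_append] at hq
          rcases hq with hq | hq <;> rw [List.mem_map] at hq
          · obtain ⟨t, -, rfl⟩ := hq
            constructor <;> simp <;> omega
          · obtain ⟨j, hj, rfl⟩ := hq
            rw [List.mem_range] at hj
            constructor <;> simp <;> omega
      have hmem : ∀ p ∈ P, ∃ x, (St7.Xw k a b (a :: w₁))[p.1]? = some x ∧
          (St7.Xw k a b (a :: w₂))[p.2]? = some x := by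
        intro p hp
        rw [hPdef, List.mem_append, List.mem_append] at hp
        rcases hp with hp | hp | hp <;> rw [List.mem_map] at hp
        · obtain ⟨i, hi, rfl⟩ := hp
          rw [List.mem_range] at hi
          refine ⟨a, ?_, ?_⟩ <;>
            [rw [hXu]; rw [hXv]] <;>
            rw [List.getElem?_append_left (by simp; omega)] <;>
            rw [List.getElem?_replicate] <;> simp [hi]
        · obtain ⟨t, -, rfl⟩ := hp
          have hg1 : m.get t = (st w₁ B).get (f t) := hf t
          have hg2 : m.get t = (st w₂ B).get (f' t) := hf' t
          rw [List.get_eq_getElem] at hg1 hg2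
          refine ⟨m.get t, ?_, ?_⟩
          · rw [hXu, List.getElem?_append_right (by simp),
              show (f t : ℕ) + (k+1) - (List.replicate (k+1) a).length = (f t : ℕ) by simp]
            rw [List.getElem?_append_left (by simpa using (f t).isLt)]
            rw [List.getElem?_eq_getElem (by simpa using (f t).isLt)]
            exact congrArg some hg1.symm
          · rw [hXv, List.getElem?_append_right (by simp),
              show (f' t : ℕ) + (k+1) - (List.replicate (k+1) a).length = (f' t : ℕ) by simp]
            rw [List.getElem?_append_left (by simpa [hNv] using (f' t).isLt)]
            rw [List.getElem?_eq_getElem (by simpa [hNv] using (f' t).isLt)]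
            exact congrArg some hg2.symm
        · obtain ⟨i, hi, rfl⟩ := hp
          rw [List.mem_range] at hi
          refine ⟨a, ?_, ?_⟩
          · rw [hXu, List.getElem?_append_right (by simp; omega),
              show k+1+N+i - (List.replicate (k+1) a).length = N + i by simp; omega]
            rw [List.getElem?_append_right (by simp [← hN]),
              show N + i - (st w₁ B).length = i by simp [← hN]]
            rw [List.getElem?_replicate]
            simp [hi]
          · rw [hXv, List.getElem?_append_right (by simp; omega),
              show k+1+N+i - (List.replicate (k+1) a).length = N + i by simp; omega]
            rw [List.getElem?_append_right (by simp [hNv]),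
              show N + i - (st w₂ B).length = i by simp [hNv]]
            rw [List.getElem?_replicate]
            simp [hi]
      have hshift : ∀ p ∈ P, p.1 < p.2 + k ∧ p.2 < p.1 + k := by
        intro p hp
        rw [hPdef, List.mem_append, List.mem_append] at hp
        rcases hp with hp | hp | hp <;> rw [List.mem_map] at hp
        · obtain ⟨i, -, rfl⟩ := hp
          constructor <;> simp <;> omega
        · obtain ⟨t, -, rfl⟩ := hp
          have l1 := flow N f t
          have l2 := flow _ f' t
          have u1 := fupp N f t
          have u2 := fupp _ f' t
          have ht := t.isLt
          constructor <;> simp <;> omega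
        · obtain ⟨i, -, rfl⟩ := hp
          constructor <;> simp <;> omega
      have hcore := St7.core k a b hab hk1 (w₁.length + 1) (a :: w₁) (a :: w₂)
        (by simp) (by simp [hlen]) P hpw hmem hshift
      have hPlen : P.length = (k+1) + (L + k) := by
        rw [hPdef]
        simp
      have hXulen : (St7.Xw k a b (a :: w₁)).length = (k+1) + (N + k) := by
        rw [hXu]
        simp [← hN]
      have hhamcons : hammingDistL (a::w₁) (a::w₂) = hammingDistL w₁ w₂ := by
        rw [St7.hammingDistL_cons]
        simp
      rw [hPlen, hXulen, hhamcons] at hcore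
      omega
    -- conclude
    have hc : (m.length : ℝ) + (hammingDistL w₁ w₂ : ℝ) ≤ ((st w₁ B).length : ℝ) := by
      exact_mod_cast hLcs
    have hNN : ((st w₂ B).length : ℝ) = ((st w₁ B).length : ℝ) := by
      exact_mod_cast (by omega : (st w₂ B).length = (st w₁ B).length)
    rw [hNN] at hml
    nlinarith [hml, hc, hθ0.le]
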